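/- Let (X,d) be a Heine–Borel metric space, p ≥ 1, and μ ∈ P_p(X) with #supp(μ) = ∞ and a unique maximizer k* of the discrete second differences Δ²m_{k,p}(μ) := m_{k+1,p}(μ) + m_{k−1,p}(μ) − 2m_{k,p}(μ) (with convention m_{0,p}(μ) = 0). Then the elbow-method functional k^elb_p(μ) := min argmax_k Δ²m_{k,p}(μ) is continuous at μ with respect to the p-Wasserstein topology: if μ_n → μ in the p-Wasserstein sense, then k^elb_p(μ_n) = k^elb_p(μ) = k* for all sufficiently large n. -/

import Mathlib

open Filter MeasureTheory Topology TopologicalSpace Metric Set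

noncomputable section

/-- Kuratowski lower limit of a sequence of sets. -/
def KurLi {Y : Type*} [TopologicalSpace Y] (A : ℕ → Set Y) : Set Y :=
  {x | ∀ U ∈ nhds x, ∀ᶠ n in atTop, (U ∩ A n).Nonempty}

/-- Kuratowski upper limit of a sequence of sets. -/
def KurLs {Y : Type*} [TopologicalSpace Y] (A : ℕ → Set Y) : Set Y :=
  {x | ∀ U ∈ nhds x, ∃ᶠ n in atTop, (U ∩ A n).Nonempty}

variable {X : Type*} [MetricSpace X] [MeasurableSpace X]

/-- The clustering cost `W_p(S,μ) = ∫ d(y,S)^p dμ(y)`. -/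
def Wp (p : ℝ) (S : Set X) (μ : Measure X) : ℝ :=
  ∫ y, infDist y S ^ p ∂μ

/-- `μ` has a finite `p`-th moment. -/
def FinMom (p : ℝ) (μ : Measure X) : Prop :=
  ∃ x : X, Integrable (fun y => dist x y ^ p) μ

/-- Convergence in the `p`-Wasserstein topology: weak convergence together with
convergence of the `p`-th moments about some point. -/
def WassTendsto (p : ℝ) (μ : ℕ → Measure X) (ν : Measure X) : Prop :=
  (∀ f : BoundedContinuousFunction X ℝ,
      Tendsto (fun n => ∫ y, f y ∂ μ n) atTop (𝓝 (∫ y, f y ∂ ν))) ∧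
  ∃ x : X, Tendsto (fun n => ∫ y, dist x y ^ p ∂ μ n) atTop (𝓝 (∫ y, dist x y ^ p ∂ ν))

/-- `S` is a feasible set of cluster centers: a nonempty finite subset of `R`
with at most `k` points. -/
def Feas (k : ℕ) (R S : Set X) : Prop :=
  S ⊆ R ∧ S.Finite ∧ S.Nonempty ∧ S.ncard ≤ k

/-- The optimal clustering cost `m_{k,p}(μ,R)`. -/
def mCost (p : ℝ) (μ : Measure X) (k : ℕ) (R : Set X) : ℝ :=
  sInf ((fun S => Wp p S μ) '' {S | Feas k R S})

/-- The set of optimal cluster-center sets `C_p(μ,k,R)`, viewed as a subset of the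
hyperspace of nonempty compact subsets of `X` with the Hausdorff metric. -/
def Cp (p : ℝ) (μ : Measure X) (k : ℕ) (R : Set X) : Set (NonemptyCompacts X) :=
  {S | Feas k R (S : Set X) ∧ ∀ T : Set X, Feas k R T → Wp p (S : Set X) μ ≤ Wp p T μ}

/-- The support of a measure on a metric space. -/
def measSupp (μ : Measure X) : Set X :=
  {x | ∀ r : ℝ, 0 < r → μ (Metric.ball x r) ≠ 0}

/-- The discrete second difference `Δ²m_{k,p}(μ) = m_{k+1,p}(μ) + m_{k−1,p}(μ) − 2m_{k,p}(μ)`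
of the unrestricted optimal clustering costs (with the convention `m_{0,p}(μ) = 0`, which
holds definitionally since `sInf ∅ = 0` in `ℝ`). -/
def elbowDiff {X : Type*} [MetricSpace X] [MeasurableSpace X] (p : ℝ) (μ : Measure X)
    (k : ℕ) : ℝ :=
  mCost p μ (k + 1) Set.univ + mCost p μ (k - 1) Set.univ - 2 * mCost p μ k Set.univ

section Aux

lemma rpow_add_le_two_rpow {p a b : ℝ} (hp : 0 ≤ p) (ha : 0 ≤ a) (hb : 0 ≤ b) :
    (a + b) ^ p ≤ 2 ^ p * (a ^ p + b ^ p) := by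
  have hmax : a + b ≤ 2 * max a b := by
    rcases le_total a b with h | h
    · simp [max_eq_right h]; linarith
    · simp [max_eq_left h]; linarith
  have h0 : (0:ℝ) ≤ max a b := le_max_of_le_left ha
  calc (a + b) ^ p ≤ (2 * max a b) ^ p :=
        Real.rpow_le_rpow (by linarith) hmax hp
    _ = 2 ^ p * (max a b) ^ p := Real.mul_rpow (by norm_num) h0
    _ ≤ 2 ^ p * (a ^ p + b ^ p) := by
        apply mul_le_mul_of_nonneg_left _ (Real.rpow_nonneg (by norm_num) p)
        rcases le_total a b with h | h
        · rw [max_eq_right h]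
          have := Real.rpow_nonneg ha p; linarith
        · rw [max_eq_left h]
          have := Real.rpow_nonneg hb p; linarith

variable {X : Type*} [MetricSpace X] [MeasurableSpace X] [BorelSpace X]

lemma continuous_distRpow (p : ℝ) (hp : 0 ≤ p) (x : X) :
    Continuous fun y => dist x y ^ p :=
  (continuous_const.dist continuous_id).rpow_const (fun _ => Or.inr hp)

lemma integrable_dist_rpow_of_integrable {p : ℝ} (hp : 0 ≤ p) {ν : Measure X}
    [IsFiniteMeasure ν] {x : X} (hx : Integrable (fun y => dist x y ^ p) ν) (z : X) :
    Integrable (fun y => dist z y ^ p) ν := by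
  have hmeas : AEStronglyMeasurable (fun y => dist z y ^ p) ν :=
    (continuous_distRpow p hp z).aestronglyMeasurable
  have hbound : Integrable (fun y => 2 ^ p * (dist z x ^ p) + 2 ^ p * (dist x y ^ p)) ν :=
    (integrable_const _).add (hx.const_mul _)
  refine hbound.mono' hmeas ?_
  filter_upwards with y
  have h1 : dist z y ≤ dist z x + dist x y := dist_triangle z x y
  have h2 : (dist z y) ^ p ≤ 2 ^ p * (dist z x ^ p + dist x y ^ p) := by
    calc (dist z y) ^ p ≤ (dist z x + dist x y) ^ p :=
          Real.rpow_le_rpow dist_nonneg h1 hp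
      _ ≤ 2 ^ p * (dist z x ^ p + dist x y ^ p) :=
          rpow_add_le_two_rpow hp dist_nonneg dist_nonneg
  have h3 : (0:ℝ) ≤ dist z y ^ p := Real.rpow_nonneg dist_nonneg p
  rw [Real.norm_eq_abs, abs_of_nonneg h3]
  linarith [h2]

lemma integrable_infDist_rpow {p : ℝ} (hp : 0 ≤ p) {ν : Measure X}
    [IsFiniteMeasure ν] {x : X} (hx : Integrable (fun y => dist x y ^ p) ν)
    {S : Set X} (hS : S.Nonempty) :
    Integrable (fun y => infDist y S ^ p) ν := by
  obtain ⟨s, hs⟩ := hS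
  have hmeas : AEStronglyMeasurable (fun y => infDist y S ^ p) ν :=
    ((Metric.continuous_infDist_pt S).rpow_const (fun _ => Or.inr hp)).aestronglyMeasurable
  refine (integrable_dist_rpow_of_integrable hp hx s).mono' hmeas ?_
  filter_upwards with y
  have h1 : infDist y S ≤ dist y s := Metric.infDist_le_dist_of_mem hs
  have h3 : (0:ℝ) ≤ infDist y S ^ p := Real.rpow_nonneg Metric.infDist_nonneg p
  rw [Real.norm_eq_abs, abs_of_nonneg h3]
  calc infDist y S ^ p ≤ dist y s ^ p := Real.rpow_le_rpow Metric.infDist_nonneg h1 hp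
    _ = dist s y ^ p := by rw [dist_comm]

end Aux

section MCost

variable {X : Type*} [MetricSpace X] [MeasurableSpace X]

lemma Wp_nonneg (p : ℝ) (S : Set X) (ν : Measure X) : 0 ≤ Wp p S ν :=
  integral_nonneg fun y => Real.rpow_nonneg Metric.infDist_nonneg p

lemma bddBelow_WpImage (p : ℝ) (ν : Measure X) (k : ℕ) (R : Set X) :
    BddBelow ((fun S => Wp p S ν) '' {S | Feas k R S}) := by
  refine ⟨0, ?_⟩
  rintro x ⟨S, -, rfl⟩
  exact Wp_nonneg p S ν

lemma mCost_nonneg (p : ℝ) (ν : Measure X) (k : ℕ) (R : Set X) :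
    0 ≤ mCost p ν k R := by
  rcases eq_or_ne ((fun S => Wp p S ν) '' {S | Feas k R S}) ∅ with h | h
  · rw [mCost, h, Real.sInf_empty]
  · exact le_csInf (Set.nonempty_iff_ne_empty.2 h)
      (by rintro b ⟨S, -, rfl⟩; exact Wp_nonneg p S ν)

lemma feas_singleton (k : ℕ) (hk : 1 ≤ k) {R : Set X} {x : X} (hx : x ∈ R) :
    Feas k R {x} :=
  ⟨by simpa using hx, Set.finite_singleton x, Set.singleton_nonempty x, by simpa using hk⟩

lemma mCost_le_Wp {p : ℝ} {ν : Measure X} {k : ℕ} {R S : Set X} (hS : Feas k R S) :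
    mCost p ν k R ≤ Wp p S ν :=
  csInf_le (bddBelow_WpImage p ν k R) ⟨S, hS, rfl⟩

lemma mCost_zero (p : ℝ) (ν : Measure X) (R : Set X) : mCost p ν 0 R = 0 := by
  have : {S : Set X | Feas 0 R S} = ∅ := by
    ext S
    simp only [Set.mem_setOf_eq, Set.mem_empty_iff_false, iff_false]
    rintro ⟨-, hfin, hne, hcard⟩
    have := (Set.ncard_pos hfin).2 hne
    omega
  rw [mCost, this, Set.image_empty, Real.sInf_empty]

lemma mCost_anti {p : ℝ} {ν : Measure X} {R : Set X} (hR : R.Nonempty)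
    {k l : ℕ} (hk : 1 ≤ k) (hkl : k ≤ l) :
    mCost p ν l R ≤ mCost p ν k R := by
  apply csInf_le_csInf (bddBelow_WpImage p ν l R)
  · obtain ⟨x, hx⟩ := hR
    exact ⟨Wp p {x} ν, ⟨{x}, feas_singleton k hk hx, rfl⟩⟩
  · apply Set.image_mono
    rintro S ⟨h1, h2, h3, h4⟩
    exact ⟨h1, h2, h3, h4.trans hkl⟩

lemma le_mCost {p c : ℝ} {ν : Measure X} {k : ℕ} {R : Set X} (hR : R.Nonempty) (hk : 1 ≤ k)
    (h : ∀ S : Set X, Feas k R S → c ≤ Wp p S ν) :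
    c ≤ mCost p ν k R := by
  obtain ⟨x, hx⟩ := hR
  refine le_csInf ⟨Wp p {x} ν, ⟨{x}, feas_singleton k hk hx, rfl⟩⟩ ?_
  rintro b ⟨S, hS, rfl⟩
  exact h S hS

lemma exists_feas_Wp_lt {p c : ℝ} {ν : Measure X} {k : ℕ} {R : Set X} (hR : R.Nonempty)
    (hk : 1 ≤ k) (h : mCost p ν k R < c) :
    ∃ S : Set X, Feas k R S ∧ Wp p S ν < c := by
  obtain ⟨x, hx⟩ := hR
  have hne : ((fun S => Wp p S ν) '' {S : Set X | Feas k R S}).Nonempty :=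
    ⟨Wp p {x} ν, ⟨{x}, feas_singleton k hk hx, rfl⟩⟩
  obtain ⟨b, ⟨S, hS, rfl⟩, hb⟩ := exists_lt_of_csInf_lt hne h
  exact ⟨S, hS, hb⟩

end MCost

section Conv

variable {X : Type*} [MetricSpace X] [MeasurableSpace X] [BorelSpace X]
variable {p : ℝ} {μ : Measure X} [IsProbabilityMeasure μ]
variable {μn : ℕ → Measure X} [∀ n, IsProbabilityMeasure (μn n)]
variable {x₀ : X}

lemma integrable_min_g (hp : 0 ≤ p) {ν : Measure X} [IsFiniteMeasure ν]
    (hg : Integrable (fun y => dist x₀ y ^ p) ν) {M : ℝ} (hM : 0 ≤ M) :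
    Integrable (fun y => min (dist x₀ y ^ p) M) ν := by
  refine hg.mono' (((continuous_distRpow p hp x₀).min continuous_const).aestronglyMeasurable) ?_
  filter_upwards with y
  have h0 : (0:ℝ) ≤ dist x₀ y ^ p := Real.rpow_nonneg dist_nonneg p
  rw [Real.norm_eq_abs, abs_of_nonneg (le_min h0 hM)]
  exact min_le_left _ _

/-- the truncated moment function, as a bounded continuous function -/
def minG (x₀ : X) (p M : ℝ) (hp : 0 ≤ p) (hM : 0 ≤ M) : BoundedContinuousFunction X ℝ :=
  BoundedContinuousFunction.ofNormedAddCommGroup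
    (fun y => min (dist x₀ y ^ p) M)
    ((continuous_distRpow p hp x₀).min continuous_const) M
    (by
      intro y
      have h0 : (0:ℝ) ≤ dist x₀ y ^ p := Real.rpow_nonneg dist_nonneg p
      rw [Real.norm_eq_abs, abs_of_nonneg (le_min h0 hM)]
      exact min_le_right _ _)

lemma tendsto_integral_gsub (hp : 0 ≤ p)
    (hgμ : Integrable (fun y => dist x₀ y ^ p) μ)
    (hgn : ∀ n, Integrable (fun y => dist x₀ y ^ p) (μn n))
    (hweak : ∀ f : BoundedContinuousFunction X ℝ,
      Tendsto (fun n => ∫ y, f y ∂ μn n) atTop (𝓝 (∫ y, f y ∂ μ)))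
    (hmomconv : Tendsto (fun n => ∫ y, dist x₀ y ^ p ∂ μn n) atTop
      (𝓝 (∫ y, dist x₀ y ^ p ∂ μ)))
    {M : ℝ} (hM : 0 ≤ M) :
    Tendsto (fun n => ∫ y, (dist x₀ y ^ p - min (dist x₀ y ^ p) M) ∂ μn n) atTop
      (𝓝 (∫ y, (dist x₀ y ^ p - min (dist x₀ y ^ p) M) ∂ μ)) := by
  have hrw : ∀ (ν : Measure X), Integrable (fun y => dist x₀ y ^ p) ν → IsFiniteMeasure ν →
      ∫ y, (dist x₀ y ^ p - min (dist x₀ y ^ p) M) ∂ ν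
      = (∫ y, dist x₀ y ^ p ∂ ν) - ∫ y, min (dist x₀ y ^ p) M ∂ ν := by
    intro ν hg hfin
    exact integral_sub hg (integrable_min_g hp hg hM)
  have h2 := hweak (minG x₀ p M hp hM)
  have h2' : Tendsto (fun n => ∫ y, min (dist x₀ y ^ p) M ∂ μn n) atTop
      (𝓝 (∫ y, min (dist x₀ y ^ p) M ∂ μ)) := h2
  simp only [hrw (μn _) (hgn _) inferInstance, hrw μ hgμ inferInstance]
  exact hmomconv.sub h2'

lemma exists_tail_bound (hp : 0 ≤ p)
    (hgμ : Integrable (fun y => dist x₀ y ^ p) μ)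
    (hgn : ∀ n, Integrable (fun y => dist x₀ y ^ p) (μn n))
    (hweak : ∀ f : BoundedContinuousFunction X ℝ,
      Tendsto (fun n => ∫ y, f y ∂ μn n) atTop (𝓝 (∫ y, f y ∂ μ)))
    (hmomconv : Tendsto (fun n => ∫ y, dist x₀ y ^ p ∂ μn n) atTop
      (𝓝 (∫ y, dist x₀ y ^ p ∂ μ)))
    {ε : ℝ} (hε : 0 < ε) :
    ∃ M : ℝ, 0 ≤ M ∧ (∫ y, (dist x₀ y ^ p - min (dist x₀ y ^ p) M) ∂ μ) < ε ∧
      ∀ᶠ n in atTop, (∫ y, (dist x₀ y ^ p - min (dist x₀ y ^ p) M) ∂ μn n) < ε := by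
  -- dominated convergence along M = j : ℕ
  have hdom : Tendsto (fun j : ℕ => ∫ y, (dist x₀ y ^ p - min (dist x₀ y ^ p) (j:ℝ)) ∂ μ)
      atTop (𝓝 0) := by
    have h0 : (0:ℝ) = ∫ y, (0:ℝ) ∂ μ := by simp
    rw [h0]
    apply MeasureTheory.tendsto_integral_of_dominated_convergence
      (fun y => dist x₀ y ^ p)
    · intro j
      exact ((continuous_distRpow p hp x₀).sub
        ((continuous_distRpow p hp x₀).min continuous_const)).aestronglyMeasurable
    · exact hgμ
    · intro j
      filter_upwards with y
      have h0' : (0:ℝ) ≤ dist x₀ y ^ p := Real.rpow_nonneg dist_nonneg p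
      have hmin0 : (0:ℝ) ≤ min (dist x₀ y ^ p) (j:ℝ) := le_min h0' (Nat.cast_nonneg j)
      rw [Real.norm_eq_abs, abs_of_nonneg (by linarith [min_le_left (dist x₀ y ^ p) ((j:ℝ))])]
      linarith [min_le_left (dist x₀ y ^ p) ((j:ℝ))]
    · filter_upwards with y
      have : ∀ᶠ j : ℕ in atTop, dist x₀ y ^ p - min (dist x₀ y ^ p) (j:ℝ) = 0 := by
        obtain ⟨j₀, hj₀⟩ := exists_nat_ge (dist x₀ y ^ p)
        filter_upwards [eventually_ge_atTop j₀] with j hj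
        have : dist x₀ y ^ p ≤ (j:ℝ) := hj₀.trans (Nat.cast_le.2 hj)
        rw [min_eq_left this]; ring
      exact Tendsto.congr' (by filter_upwards [this] with j h using h.symm) tendsto_const_nhds
  obtain ⟨j, hj⟩ := (hdom.eventually (eventually_lt_nhds hε)).exists
  refine ⟨(j:ℝ), Nat.cast_nonneg j, hj, ?_⟩
  exact (tendsto_integral_gsub hp hgμ hgn hweak hmomconv (Nat.cast_nonneg j)).eventually
    (eventually_lt_nhds hj)

lemma key_tendsto (hp : 0 ≤ p)
    (hgμ : Integrable (fun y => dist x₀ y ^ p) μ)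
    (hgn : ∀ n, Integrable (fun y => dist x₀ y ^ p) (μn n))
    (hweak : ∀ f : BoundedContinuousFunction X ℝ,
      Tendsto (fun n => ∫ y, f y ∂ μn n) atTop (𝓝 (∫ y, f y ∂ μ)))
    (hmomconv : Tendsto (fun n => ∫ y, dist x₀ y ^ p ∂ μn n) atTop
      (𝓝 (∫ y, dist x₀ y ^ p ∂ μ)))
    (f : X → ℝ) (hf : Continuous f) (hf0 : ∀ y, 0 ≤ f y)
    (C₁ C₂ : ℝ) (hC₁ : 0 < C₁) (hC₂ : 0 ≤ C₂)
    (hfle : ∀ y, f y ≤ C₁ * dist x₀ y ^ p + C₂) :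
    Tendsto (fun n => ∫ y, f y ∂ μn n) atTop (𝓝 (∫ y, f y ∂ μ)) := by
  rw [Metric.tendsto_atTop]
  intro ε hε
  have hε4 : 0 < ε / (4 * C₁) := by positivity
  obtain ⟨M', hM'0, hM'μ, hM'n⟩ := exists_tail_bound hp hgμ hgn hweak hmomconv hε4
  set M : ℝ := C₁ * M' + C₂ with hMdef
  have hM0 : 0 ≤ M := by positivity
  -- f is integrable wrt any measure with integrable g
  have hfint : ∀ (ν : Measure X), IsProbabilityMeasure ν →
      Integrable (fun y => dist x₀ y ^ p) ν → Integrable f ν := by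
    intro ν _ hg
    refine ((hg.const_mul C₁).add (integrable_const C₂)).mono' hf.aestronglyMeasurable ?_
    filter_upwards with y
    rw [Real.norm_eq_abs, abs_of_nonneg (hf0 y)]
    exact hfle y
  -- truncation
  have hfM_cont : Continuous fun y => min (f y) M := hf.min continuous_const
  have hfMint : ∀ (ν : Measure X), IsProbabilityMeasure ν → Integrable (fun y => min (f y) M) ν := by
    intro ν _
    refine (integrable_const M).mono' hfM_cont.aestronglyMeasurable ?_
    filter_upwards with y
    rw [Real.norm_eq_abs, abs_of_nonneg (le_min (hf0 y) hM0)]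
    exact min_le_right _ _
  -- pointwise: f - min(f,M) ≤ C₁ * (g - min(g,M'))
  have hpoint : ∀ y, f y - min (f y) M ≤ C₁ * (dist x₀ y ^ p - min (dist x₀ y ^ p) M') := by
    intro y
    have hgmin : min (dist x₀ y ^ p) M' ≤ M' := min_le_right _ _
    rcases le_total (f y) M with h | h
    · rw [min_eq_left h]
      have h0 : (0:ℝ) ≤ dist x₀ y ^ p - min (dist x₀ y ^ p) M' :=
        sub_nonneg.2 (min_le_left _ _)
      nlinarith
    · rw [min_eq_right h]
      have := hfle y
      nlinarith
  have hgap : ∀ (ν : Measure X), IsProbabilityMeasure ν →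
      Integrable (fun y => dist x₀ y ^ p) ν →
      (∫ y, (dist x₀ y ^ p - min (dist x₀ y ^ p) M') ∂ ν) < ε / (4 * C₁) →
      |(∫ y, f y ∂ ν) - ∫ y, min (f y) M ∂ ν| < ε / 4 := by
    intro ν hprob hg htail
    have h1 : (∫ y, f y ∂ ν) - ∫ y, min (f y) M ∂ ν
        = ∫ y, (f y - min (f y) M) ∂ ν := (integral_sub (hfint ν hprob hg) (hfMint ν hprob)).symm
    rw [h1]
    have hnon : 0 ≤ ∫ y, (f y - min (f y) M) ∂ ν :=
      integral_nonneg fun y => sub_nonneg.2 (min_le_left _ _)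
    rw [abs_of_nonneg hnon]
    have h2 : ∫ y, (f y - min (f y) M) ∂ ν ≤ ∫ y, C₁ * (dist x₀ y ^ p - min (dist x₀ y ^ p) M') ∂ ν := by
      apply integral_mono ((hfint ν hprob hg).sub (hfMint ν hprob))
        ((hg.sub (integrable_min_g hp hg hM'0)).const_mul C₁) hpoint
    rw [integral_const_mul] at h2
    calc ∫ y, (f y - min (f y) M) ∂ ν ≤ C₁ * ∫ y, (dist x₀ y ^ p - min (dist x₀ y ^ p) M') ∂ ν := h2
      _ < C₁ * (ε / (4 * C₁)) := by
          apply mul_lt_mul_of_pos_left htail hC₁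
      _ = ε / 4 := by field_simp
  -- bounded continuous part
  set F : BoundedContinuousFunction X ℝ := BoundedContinuousFunction.ofNormedAddCommGroup
    (fun y => min (f y) M) hfM_cont M
    (by
      intro y
      rw [Real.norm_eq_abs, abs_of_nonneg (le_min (hf0 y) hM0)]
      exact min_le_right _ _) with hF
  have hFconv : Tendsto (fun n => ∫ y, min (f y) M ∂ μn n) atTop
      (𝓝 (∫ y, min (f y) M ∂ μ)) := hweak F
  have hFev : ∀ᶠ n in atTop, |(∫ y, min (f y) M ∂ μn n) - ∫ y, min (f y) M ∂ μ| < ε / 4 := by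
    have := Metric.tendsto_atTop.1 hFconv (ε/4) (by positivity)
    obtain ⟨N, hN⟩ := this
    filter_upwards [eventually_ge_atTop N] with n hn
    have := hN n hn
    rwa [Real.dist_eq] at this
  have hall : ∀ᶠ n in atTop,
      dist (∫ y, f y ∂ μn n) (∫ y, f y ∂ μ) < ε := by
    filter_upwards [hFev, hM'n] with n h1 h2
    have hgapn := hgap (μn n) inferInstance (hgn n) h2
    have hgapμ := hgap μ inferInstance hgμ hM'μ
    rw [Real.dist_eq]
    have : (∫ y, f y ∂ μn n) - ∫ y, f y ∂ μ
        = ((∫ y, f y ∂ μn n) - ∫ y, min (f y) M ∂ μn n)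
          + ((∫ y, min (f y) M ∂ μn n) - ∫ y, min (f y) M ∂ μ)
          - ((∫ y, f y ∂ μ) - ∫ y, min (f y) M ∂ μ) := by ring
    rw [this]
    have ha := abs_sub_abs_le_abs_sub ((∫ y, f y ∂ μn n)) ((∫ y, f y ∂ μ))
    calc |_| ≤ |(∫ y, f y ∂ μn n) - ∫ y, min (f y) M ∂ μn n|
          + |(∫ y, min (f y) M ∂ μn n) - ∫ y, min (f y) M ∂ μ|
          + |(∫ y, f y ∂ μ) - ∫ y, min (f y) M ∂ μ| := by
            exact (abs_sub _ _).trans (by gcongr; exact abs_add_le _ _)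
      _ < ε/4 + ε/4 + ε/4 := by gcongr
      _ < ε := by linarith
  exact eventually_atTop.1 hall

lemma tendsto_Wp (hp : 1 ≤ p)
    (hgμ : Integrable (fun y => dist x₀ y ^ p) μ)
    (hgn : ∀ n, Integrable (fun y => dist x₀ y ^ p) (μn n))
    (hweak : ∀ f : BoundedContinuousFunction X ℝ,
      Tendsto (fun n => ∫ y, f y ∂ μn n) atTop (𝓝 (∫ y, f y ∂ μ)))
    (hmomconv : Tendsto (fun n => ∫ y, dist x₀ y ^ p ∂ μn n) atTop
      (𝓝 (∫ y, dist x₀ y ^ p ∂ μ)))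
    {S : Set X} (hS : S.Nonempty) :
    Tendsto (fun n => Wp p S (μn n)) atTop (𝓝 (Wp p S μ)) := by
  have hp0 : (0:ℝ) ≤ p := le_trans zero_le_one hp
  obtain ⟨s, hs⟩ := hS
  apply key_tendsto hp0 hgμ hgn hweak hmomconv
    (fun y => infDist y S ^ p)
    ((Metric.continuous_infDist_pt S).rpow_const (fun _ => Or.inr hp0))
    (fun y => Real.rpow_nonneg Metric.infDist_nonneg p)
    (2 ^ p) (2 ^ p * dist x₀ s ^ p)
    (Real.rpow_pos_of_pos (by norm_num) p)
    (by positivity)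
  intro y
  have h1 : infDist y S ≤ dist y s := Metric.infDist_le_dist_of_mem hs
  have h2 : dist y s ≤ dist y x₀ + dist x₀ s := dist_triangle _ _ _
  calc infDist y S ^ p ≤ (dist y x₀ + dist x₀ s) ^ p :=
        Real.rpow_le_rpow Metric.infDist_nonneg (h1.trans h2) hp0
    _ ≤ 2 ^ p * (dist y x₀ ^ p + dist x₀ s ^ p) :=
        rpow_add_le_two_rpow hp0 dist_nonneg dist_nonneg
    _ = 2 ^ p * dist x₀ y ^ p + 2 ^ p * dist x₀ s ^ p := by rw [dist_comm y x₀]; ring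

lemma mCost_limsup (hp : 1 ≤ p)
    (hgμ : Integrable (fun y => dist x₀ y ^ p) μ)
    (hgn : ∀ n, Integrable (fun y => dist x₀ y ^ p) (μn n))
    (hweak : ∀ f : BoundedContinuousFunction X ℝ,
      Tendsto (fun n => ∫ y, f y ∂ μn n) atTop (𝓝 (∫ y, f y ∂ μ)))
    (hmomconv : Tendsto (fun n => ∫ y, dist x₀ y ^ p ∂ μn n) atTop
      (𝓝 (∫ y, dist x₀ y ^ p ∂ μ)))
    {k : ℕ} (hk : 1 ≤ k) {ε : ℝ} (hε : 0 < ε) :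
    ∀ᶠ n in atTop, mCost p (μn n) k Set.univ < mCost p μ k Set.univ + ε := by
  have huniv : (Set.univ : Set X).Nonempty := ⟨x₀, trivial⟩
  obtain ⟨S, hFeas, hWp⟩ := exists_feas_Wp_lt huniv hk
    (show mCost p μ k Set.univ < mCost p μ k Set.univ + ε/2 by linarith)
  have hconv := tendsto_Wp hp hgμ hgn hweak hmomconv hFeas.2.2.1
  have hev : ∀ᶠ n in atTop, Wp p S (μn n) < mCost p μ k Set.univ + ε :=
    hconv.eventually (eventually_lt_nhds (by linarith))
  filter_upwards [hev] with n hn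
  exact lt_of_le_of_lt (mCost_le_Wp hFeas) hn

lemma Wp_center_trunc (hp : 1 ≤ p) {ν : Measure X} [IsProbabilityMeasure ν]
    (hg : Integrable (fun y => dist x₀ y ^ p) ν)
    {M₁ : ℝ} (hM₁ : 0 ≤ M₁)
    {S : Set X} (hfin : S.Finite) (hne : S.Nonempty) :
    ∃ S₁ : Set X, S₁ ⊆ closedBall x₀ (2 * (2*M₁+1) ^ p⁻¹) ∧ S₁.Finite ∧ S₁.Nonempty ∧
      S₁.ncard ≤ S.ncard ∧
      Wp p S₁ ν ≤ Wp p S ν + 2 * ∫ y, (dist x₀ y ^ p - min (dist x₀ y ^ p) M₁) ∂ ν := by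
  classical
  have hp0 : (0:ℝ) ≤ p := le_trans zero_le_one hp
  have hpne : p ≠ 0 := by intro h; rw [h] at hp; norm_num at hp
  set r : ℝ := (2*M₁+1) ^ p⁻¹ with hrdef
  have hr0 : 0 ≤ r := Real.rpow_nonneg (by linarith) _
  have hrp : r ^ p = 2*M₁+1 := Real.rpow_inv_rpow (by linarith) hpne
  set B : Set X := closedBall x₀ (2*r) with hBdef
  have hx₀B : x₀ ∈ B := by simp [hBdef]; linarith
  have hIntTail : 0 ≤ ∫ y, (dist x₀ y ^ p - min (dist x₀ y ^ p) M₁) ∂ ν :=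
    integral_nonneg fun y => sub_nonneg.2 (min_le_left _ _)
  by_cases hSB : S ⊆ B
  · exact ⟨S, hSB, hfin, hne, le_refl _, by linarith⟩
  · obtain ⟨s₀, hs₀S, hs₀B⟩ := Set.not_subset.1 hSB
    refine ⟨(S ∩ B) ∪ {x₀}, ?_, ?_, ?_, ?_, ?_⟩
    · exact Set.union_subset (Set.inter_subset_right) (by simpa using hx₀B)
    · exact (hfin.inter_of_left B).union (Set.finite_singleton x₀)
    · exact ⟨x₀, Or.inr rfl⟩
    · have h1 : ((S ∩ B) ∪ {x₀}).ncard ≤ (S ∩ B).ncard + 1 := by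
        simpa using Set.ncard_union_le (S ∩ B) {x₀}
      have h2 : (S ∩ B).ncard < S.ncard := by
        apply Set.ncard_lt_ncard _ hfin
        exact ⟨Set.inter_subset_left, fun hsub => hs₀B (hsub hs₀S).2⟩
      omega
    · -- integral inequality via pointwise bound
      set S₁ : Set X := (S ∩ B) ∪ {x₀} with hS₁def
      have hS₁ne : S₁.Nonempty := ⟨x₀, Or.inr rfl⟩
      have hpoint : ∀ y, infDist y S₁ ^ p ≤ infDist y S ^ p
          + 2 * (dist x₀ y ^ p - min (dist x₀ y ^ p) M₁) := by
        intro y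
        have hx₀S₁ : x₀ ∈ S₁ := Or.inr rfl
        rcases le_or_gt r (dist x₀ y) with hcase | hcase
        · -- tail case
          have h1 : infDist y S₁ ≤ dist x₀ y := by
            simpa [dist_comm] using Metric.infDist_le_dist_of_mem (s := S₁) (x := y) hx₀S₁
          have h2 : infDist y S₁ ^ p ≤ dist x₀ y ^ p :=
            Real.rpow_le_rpow Metric.infDist_nonneg h1 hp0
          have h3 : r ^ p ≤ dist x₀ y ^ p := Real.rpow_le_rpow hr0 hcase hp0
          have h4 : min (dist x₀ y ^ p) M₁ ≤ M₁ := min_le_right _ _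
          have h5 : (0:ℝ) ≤ infDist y S ^ p := Real.rpow_nonneg Metric.infDist_nonneg p
          rw [hrp] at h3
          linarith
        · -- near case: infDist y S₁ ≤ infDist y S
          have hmin : min (dist x₀ y ^ p) M₁ ≤ dist x₀ y ^ p := min_le_left _ _
          have hid : infDist y S₁ ≤ infDist y S := by
            obtain ⟨s, hsS, hseq⟩ := (hfin.isCompact).exists_infDist_eq_dist hne y
            by_cases hsB' : s ∈ B
            · calc infDist y S₁ ≤ dist y s :=
                    Metric.infDist_le_dist_of_mem (Or.inl ⟨hsS, hsB'⟩)
                _ = infDist y S := hseq.symm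
            · have hfar : 2*r < dist x₀ s := by
                have h := hsB'
                rw [hBdef, Metric.mem_closedBall, not_le, dist_comm] at h
                exact h
              have : dist y x₀ < dist y s := by
                have htri : dist x₀ s ≤ dist x₀ y + dist y s := dist_triangle _ _ _
                have := dist_comm x₀ y
                calc dist y x₀ = dist x₀ y := dist_comm y x₀
                  _ < r := hcase
                  _ ≤ dist y s := by linarith
              calc infDist y S₁ ≤ dist y x₀ := Metric.infDist_le_dist_of_mem hx₀S₁
                _ ≤ dist y s := le_of_lt this
                _ = infDist y S := hseq.symm
          have h2 : infDist y S₁ ^ p ≤ infDist y S ^ p :=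
            Real.rpow_le_rpow Metric.infDist_nonneg hid hp0
          linarith
      have hint1 : Integrable (fun y => infDist y S₁ ^ p) ν :=
        integrable_infDist_rpow hp0 hg hS₁ne
      have htail_int : Integrable (fun y => dist x₀ y ^ p - min (dist x₀ y ^ p) M₁) ν := by
        have := hg.sub (integrable_min_g hp0 hg hM₁)
        exact this
      have hint2 : Integrable (fun y => infDist y S ^ p
          + 2 * (dist x₀ y ^ p - min (dist x₀ y ^ p) M₁)) ν :=
        (integrable_infDist_rpow hp0 hg hne).add (htail_int.const_mul 2)
      have := integral_mono hint1 hint2 hpoint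
      rw [integral_add (integrable_infDist_rpow hp0 hg hne)
        (htail_int.const_mul 2), integral_const_mul] at this
      exact this

set_option maxHeartbeats 2000000 in
lemma mCost_liminf [ProperSpace X] (hp : 1 ≤ p)
    (hgμ : Integrable (fun y => dist x₀ y ^ p) μ)
    (hgn : ∀ n, Integrable (fun y => dist x₀ y ^ p) (μn n))
    (hweak : ∀ f : BoundedContinuousFunction X ℝ,
      Tendsto (fun n => ∫ y, f y ∂ μn n) atTop (𝓝 (∫ y, f y ∂ μ)))
    (hmomconv : Tendsto (fun n => ∫ y, dist x₀ y ^ p ∂ μn n) atTop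
      (𝓝 (∫ y, dist x₀ y ^ p ∂ μ)))
    {k : ℕ} (hk : 1 ≤ k) {ε : ℝ} (hε : 0 < ε) :
    ∀ᶠ n in atTop, mCost p μ k Set.univ - ε < mCost p (μn n) k Set.univ := by
  classical
  have hp0 : (0:ℝ) ≤ p := le_trans zero_le_one hp
  have hpne : p ≠ 0 := by intro h; rw [h] at hp; norm_num at hp
  set m := mCost p μ k Set.univ with hm
  obtain ⟨M₁, hM₁0, hM₁μ, hM₁n⟩ := exists_tail_bound hp0 hgμ hgn hweak hmomconv
    (show (0:ℝ) < ε/8 by linarith)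
  set r : ℝ := (2*M₁+1) ^ p⁻¹ with hrdef
  have hr0 : 0 ≤ r := Real.rpow_nonneg (by linarith) _
  set R : ℝ := 2*r with hR
  have hR0 : 0 ≤ R := by positivity
  have hR1p : (0:ℝ) < (R+1)^p := Real.rpow_pos_of_pos (by linarith) p
  set c : ℝ := 2^p * (R+1)^p with hc
  have h2p : (0:ℝ) < 2^p := Real.rpow_pos_of_pos (by norm_num) p
  have hc0 : 0 < c := mul_pos h2p hR1p
  set Cc : ℝ := 2^(p+1) + c with hCc
  have h2p1 : (0:ℝ) < 2^(p+1) := Real.rpow_pos_of_pos (by norm_num) (p+1)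
  have hCc0 : 0 < Cc := by positivity
  obtain ⟨M₂, hM₂0, hM₂μ, hM₂n⟩ := exists_tail_bound hp0 hgμ hgn hweak hmomconv
    (show (0:ℝ) < ε/(8*Cc) by positivity)
  set T : ℝ := (2*M₂+1) ^ p⁻¹ with hT
  have hT0 : 0 ≤ T := Real.rpow_nonneg (by linarith) _
  have hTp : T ^ p = 2*M₂+1 := Real.rpow_inv_rpow (by linarith) hpne
  set C : ℝ := T + R + 1 with hCdef
  obtain ⟨δ₀, hδ₀pos, hδ₀⟩ := Metric.uniformContinuousOn_iff.1
    ((isCompact_Icc : IsCompact (Icc (0:ℝ) C)).uniformContinuousOn_of_continuous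
      ((continuous_id.rpow_const fun _ => Or.inr hp0).continuousOn)) (ε/8) (by linarith)
  simp only [id_eq] at hδ₀
  set δ : ℝ := min (δ₀/2) 1 with hδdef
  have hδpos : 0 < δ := lt_min (by linarith) one_pos
  have hδ1 : δ ≤ 1 := min_le_right _ _
  have hδlt : δ < δ₀ := lt_of_le_of_lt (min_le_left _ _) (by linarith)
  obtain ⟨N₀, hN₀sub, hN₀fin, hN₀cov⟩ := Metric.finite_approx_of_totallyBounded
    (isCompact_closedBall x₀ R).totallyBounded δ hδpos
  set N : Set X := N₀ ∪ {x₀} with hN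
  have hx₀ball : x₀ ∈ closedBall x₀ R := by simp [hR0]
  have hNsub : N ⊆ closedBall x₀ R :=
    Set.union_subset hN₀sub (by simpa using hx₀ball)
  have hNfin : N.Finite := hN₀fin.union (Set.finite_singleton x₀)
  set ρ : X → X := fun z => if h : ∃ y ∈ N₀, dist z y < δ then h.choose else x₀ with hρ
  have hρmem : ∀ z, ρ z ∈ N := by
    intro z
    by_cases h : ∃ y ∈ N₀, dist z y < δ
    · simp only [hρ, dif_pos h]
      exact Set.mem_union_left _ h.choose_spec.1
    · simp only [hρ, dif_neg h]
      exact Set.mem_union_right _ rfl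
  have hρclose : ∀ z ∈ closedBall x₀ R, dist z (ρ z) ≤ δ := by
    intro z hz
    have hzcov := hN₀cov hz
    simp only [Set.mem_iUnion, Metric.mem_ball] at hzcov
    obtain ⟨y, hyN, hy⟩ := hzcov
    have h : ∃ y ∈ N₀, dist z y < δ := ⟨y, hyN, hy⟩
    simp only [hρ, dif_pos h]
    exact le_of_lt h.choose_spec.2
  have hfam : {S' : Set X | S' ⊆ N}.Finite := hNfin.finite_subsets
  have hevS : ∀ᶠ n in atTop, ∀ S' ∈ {S' : Set X | S' ⊆ N},
      Feas k Set.univ S' → m - ε/8 < Wp p S' (μn n) := by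
    rw [Filter.eventually_all_finite hfam]
    intro S' hS'
    by_cases hF : Feas k Set.univ S'
    · have hlow : m - ε/8 < Wp p S' μ :=
        lt_of_lt_of_le (by linarith) (mCost_le_Wp hF)
      filter_upwards [(tendsto_Wp hp hgμ hgn hweak hmomconv hF.2.2.1).eventually
        (eventually_gt_nhds hlow)] with n h _
      exact h
    · filter_upwards with n h
      exact absurd h hF
  clear_value m r R c Cc T C δ
  filter_upwards [hM₁n, hM₂n, hevS] with n h1 h2 h3
  have hlow : m - 7*ε/8 ≤ mCost p (μn n) k Set.univ := by
    apply le_mCost ⟨x₀, Set.mem_univ x₀⟩ hk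
    rintro S ⟨-, hfin, hne, hcard⟩
    obtain ⟨S₁, hS₁sub0, hS₁fin, hS₁ne, hS₁card, hS₁W⟩ :=
      Wp_center_trunc (ν := μn n) hp (hgn n) hM₁0 hfin hne
    have hS₁sub : S₁ ⊆ closedBall x₀ R := by rw [hR, hrdef]; exact hS₁sub0
    set S₂ : Set X := ρ '' S₁ with hS₂
    have hS₂sub : S₂ ⊆ N := by rintro _ ⟨z, -, rfl⟩; exact hρmem z
    have hS₂ne : S₂.Nonempty := hS₁ne.image ρ
    have hS₂fin : S₂.Finite := hS₁fin.image ρ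
    have hS₂card : S₂.ncard ≤ k :=
      le_trans (le_trans (Set.ncard_image_le hS₁fin) hS₁card) hcard
    have hS₂feas : Feas k Set.univ S₂ := ⟨Set.subset_univ _, hS₂fin, hS₂ne, hS₂card⟩
    have hpoint : ∀ y, infDist y S₂ ^ p ≤ infDist y S₁ ^ p
        + (ε/8 + Cc * (dist x₀ y ^ p - min (dist x₀ y ^ p) M₂)) := by
      intro y
      have ha0 : 0 ≤ infDist y S₁ := Metric.infDist_nonneg
      have hgy0 : (0:ℝ) ≤ dist x₀ y ^ p := Real.rpow_nonneg dist_nonneg p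
      have hmin2 : min (dist x₀ y ^ p) M₂ ≤ dist x₀ y ^ p := min_le_left _ _
      have haub : infDist y S₁ ≤ dist x₀ y + R := by
        obtain ⟨s, hs⟩ := hS₁ne
        have hs' := hS₁sub hs
        rw [Metric.mem_closedBall] at hs'
        calc infDist y S₁ ≤ dist y s := Metric.infDist_le_dist_of_mem hs
          _ ≤ dist y x₀ + dist x₀ s := dist_triangle _ _ _
          _ ≤ dist x₀ y + R := by
              rw [dist_comm y x₀]
              rw [dist_comm s x₀] at hs'
              linarith
      have h2le : infDist y S₂ ≤ infDist y S₁ + δ := by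
        obtain ⟨s, hsS₁, hseq⟩ := hS₁fin.isCompact.exists_infDist_eq_dist hS₁ne y
        have hcl : dist s (ρ s) ≤ δ := hρclose s (hS₁sub hsS₁)
        calc infDist y S₂ ≤ dist y (ρ s) :=
              Metric.infDist_le_dist_of_mem ⟨s, hsS₁, rfl⟩
          _ ≤ dist y s + dist s (ρ s) := dist_triangle _ _ _
          _ ≤ infDist y S₁ + δ := by rw [hseq]; linarith
      have hS₂ball : infDist y S₂ ≤ dist x₀ y + R := by
        obtain ⟨w, hw⟩ := hS₂ne
        have hw' := hNsub (hS₂sub hw)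
        rw [Metric.mem_closedBall] at hw'
        calc infDist y S₂ ≤ dist y w := Metric.infDist_le_dist_of_mem hw
          _ ≤ dist y x₀ + dist x₀ w := dist_triangle _ _ _
          _ ≤ dist x₀ y + R := by
              rw [dist_comm y x₀]
              rw [dist_comm w x₀] at hw'
              linarith
      rcases le_or_gt (dist x₀ y) T with hcase | hcase
      · have haC : infDist y S₁ ∈ Icc (0:ℝ) C := ⟨ha0, by rw [hCdef]; linarith⟩
        have haδC : infDist y S₁ + δ ∈ Icc (0:ℝ) C := ⟨by linarith, by rw [hCdef]; linarith⟩
        have hUC := hδ₀ (infDist y S₁ + δ) haδC (infDist y S₁) haC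
          (by rw [Real.dist_eq, add_sub_cancel_left, abs_of_nonneg hδpos.le]; exact hδlt)
        have h5 : (infDist y S₁ + δ)^p - infDist y S₁ ^ p < ε/8 := by
          rw [Real.dist_eq] at hUC
          have := le_abs_self ((infDist y S₁ + δ)^p - infDist y S₁ ^ p)
          simpa using lt_of_le_of_lt this hUC
        have h6 : infDist y S₂ ^ p ≤ (infDist y S₁ + δ)^p :=
          Real.rpow_le_rpow Metric.infDist_nonneg h2le hp0
        have h7 : 0 ≤ Cc * (dist x₀ y ^ p - min (dist x₀ y ^ p) M₂) :=
          mul_nonneg hCc0.le (by linarith)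
        linarith
      · have hg2 : 2*M₂+1 ≤ dist x₀ y ^ p := by
          rw [← hTp]; exact Real.rpow_le_rpow hT0 hcase.le hp0
        have hminM₂ : min (dist x₀ y ^ p) M₂ = M₂ := min_eq_right (by linarith)
        have hLHS : infDist y S₂ ^ p ≤ 2^p * dist x₀ y ^ p + c := by
          calc infDist y S₂ ^ p ≤ (dist x₀ y + R)^p :=
                Real.rpow_le_rpow Metric.infDist_nonneg hS₂ball hp0
            _ ≤ 2^p * (dist x₀ y ^ p + R^p) :=
                rpow_add_le_two_rpow hp0 dist_nonneg hR0
            _ ≤ 2^p * (dist x₀ y ^ p + (R+1)^p) := by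
                have : R^p ≤ (R+1)^p := Real.rpow_le_rpow hR0 (by linarith) hp0
                nlinarith
            _ = 2^p * dist x₀ y ^ p + c := by rw [hc]; ring
        have hkey1 : 2^p * dist x₀ y ^ p ≤ 2^p * (2*(dist x₀ y ^ p - M₂)) :=
          mul_le_mul_of_nonneg_left (by linarith) h2p.le
        have hkey2 : c * 1 ≤ c * (dist x₀ y ^ p - M₂) :=
          mul_le_mul_of_nonneg_left (by linarith) hc0.le
        have h2p1eq : (2:ℝ)^(p+1) = 2 * 2^p := by
          rw [Real.rpow_add (by norm_num : (0:ℝ) < 2), Real.rpow_one]; ring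
        have hRHS : 2^p * dist x₀ y ^ p + c ≤ Cc * (dist x₀ y ^ p - M₂) := by
          rw [hCc, h2p1eq]
          nlinarith
        have ha0p : (0:ℝ) ≤ infDist y S₁ ^ p := Real.rpow_nonneg ha0 p
        rw [hminM₂]
        linarith
    have htail2_int : Integrable (fun y => dist x₀ y ^ p - min (dist x₀ y ^ p) M₂) (μn n) := by
      have := (hgn n).sub (integrable_min_g hp0 (hgn n) hM₂0)
      exact this
    have hint1 : Integrable (fun y => infDist y S₂ ^ p) (μn n) :=
      integrable_infDist_rpow hp0 (hgn n) hS₂ne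
    have hint2a : Integrable (fun y => (ε/8 : ℝ) + Cc * (dist x₀ y ^ p - min (dist x₀ y ^ p) M₂)) (μn n) := by
      have := (integrable_const (ε/8 : ℝ)).add (htail2_int.const_mul Cc)
      simpa using this
    have hint2 : Integrable (fun y => infDist y S₁ ^ p
        + (ε/8 + Cc * (dist x₀ y ^ p - min (dist x₀ y ^ p) M₂))) (μn n) := by
      have := (integrable_infDist_rpow hp0 (hgn n) hS₁ne).add hint2a
      exact this
    have hmono := integral_mono hint1 hint2 hpoint
    rw [integral_add (integrable_infDist_rpow hp0 (hgn n) hS₁ne) hint2a,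
      integral_add (integrable_const _) (htail2_int.const_mul Cc),
      integral_const_mul, integral_const] at hmono
    simp only [measure_univ, ENNReal.toReal_one, probReal_univ, one_smul] at hmono
    have ht2 : Cc * (∫ y, (dist x₀ y ^ p - min (dist x₀ y ^ p) M₂) ∂ μn n) ≤ ε/8 := by
      calc Cc * (∫ y, (dist x₀ y ^ p - min (dist x₀ y ^ p) M₂) ∂ μn n)
          ≤ Cc * (ε/(8*Cc)) := mul_le_mul_of_nonneg_left h2.le hCc0.le
        _ = ε/8 := by field_simp
    have hWp2 : Wp p S₂ (μn n) = ∫ a, infDist a S₂ ^ p ∂ μn n := rfl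
    have hWp1 : Wp p S₁ (μn n) = ∫ a, infDist a S₁ ^ p ∂ μn n := rfl
    rw [← hWp2, ← hWp1] at hmono
    have hfinal := h3 S₂ hS₂sub hS₂feas
    -- hfinal : m - ε/8 < Wp p S₂ (μn n)
    -- hmono : Wp S₂ ≤ Wp S₁ + (ε/8 + Cc * tail₂)
    -- hS₁W : Wp S₁ ≤ Wp S + 2 * tail₁ ; h1 : tail₁ < ε/8
    linarith
  linarith

lemma tendsto_mCost [ProperSpace X] (hp : 1 ≤ p)
    (hgμ : Integrable (fun y => dist x₀ y ^ p) μ)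
    (hgn : ∀ n, Integrable (fun y => dist x₀ y ^ p) (μn n))
    (hweak : ∀ f : BoundedContinuousFunction X ℝ,
      Tendsto (fun n => ∫ y, f y ∂ μn n) atTop (𝓝 (∫ y, f y ∂ μ)))
    (hmomconv : Tendsto (fun n => ∫ y, dist x₀ y ^ p ∂ μn n) atTop
      (𝓝 (∫ y, dist x₀ y ^ p ∂ μ)))
    (k : ℕ) :
    Tendsto (fun n => mCost p (μn n) k Set.univ) atTop (𝓝 (mCost p μ k Set.univ)) := by
  rcases Nat.eq_zero_or_pos k with rfl | hk
  · simp only [mCost_zero]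
    exact tendsto_const_nhds
  · rw [Metric.tendsto_atTop]
    intro ε hε
    have h1 := mCost_limsup hp hgμ hgn hweak hmomconv hk (half_pos hε)
    have h2 := mCost_liminf hp hgμ hgn hweak hmomconv hk (half_pos hε)
    have h3 : ∀ᶠ n in atTop,
        dist (mCost p (μn n) k Set.univ) (mCost p μ k Set.univ) < ε := by
      filter_upwards [h1, h2] with n ha hb
      rw [Real.dist_eq, abs_lt]
      constructor <;> linarith
    exact eventually_atTop.1 h3

end Conv

section Small

variable {X : Type*} [MetricSpace X] [MeasurableSpace X] [BorelSpace X]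

lemma exists_tail_bound_single {p : ℝ} (hp0 : 0 ≤ p) {μ : Measure X} [IsProbabilityMeasure μ]
    {x₀ : X} (hgμ : Integrable (fun y => dist x₀ y ^ p) μ) {ε : ℝ} (hε : 0 < ε) :
    ∃ M : ℝ, 0 ≤ M ∧ (∫ y, (dist x₀ y ^ p - min (dist x₀ y ^ p) M) ∂ μ) < ε := by
  have hdom : Tendsto (fun j : ℕ => ∫ y, (dist x₀ y ^ p - min (dist x₀ y ^ p) (j:ℝ)) ∂ μ)
      atTop (𝓝 0) := by
    have h0 : (0:ℝ) = ∫ y, (0:ℝ) ∂ μ := by simp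
    rw [h0]
    apply MeasureTheory.tendsto_integral_of_dominated_convergence
      (fun y => dist x₀ y ^ p)
    · intro j
      exact ((continuous_distRpow p hp0 x₀).sub
        ((continuous_distRpow p hp0 x₀).min continuous_const)).aestronglyMeasurable
    · exact hgμ
    · intro j
      filter_upwards with y
      have h0' : (0:ℝ) ≤ dist x₀ y ^ p := Real.rpow_nonneg dist_nonneg p
      have hmin0 : (0:ℝ) ≤ min (dist x₀ y ^ p) (j:ℝ) := le_min h0' (Nat.cast_nonneg j)
      rw [Real.norm_eq_abs, abs_of_nonneg (by linarith [min_le_left (dist x₀ y ^ p) ((j:ℝ))])]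
      linarith [min_le_left (dist x₀ y ^ p) ((j:ℝ))]
    · filter_upwards with y
      have : ∀ᶠ j : ℕ in atTop, dist x₀ y ^ p - min (dist x₀ y ^ p) (j:ℝ) = 0 := by
        obtain ⟨j₀, hj₀⟩ := exists_nat_ge (dist x₀ y ^ p)
        filter_upwards [eventually_ge_atTop j₀] with j hj
        have : dist x₀ y ^ p ≤ (j:ℝ) := hj₀.trans (Nat.cast_le.2 hj)
        rw [min_eq_left this]; ring
      exact Tendsto.congr' (by filter_upwards [this] with j h using h.symm) tendsto_const_nhds
  obtain ⟨j, hj⟩ := (hdom.eventually (eventually_lt_nhds hε)).exists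
  exact ⟨(j:ℝ), Nat.cast_nonneg j, hj⟩

lemma mCost_small [ProperSpace X] {p : ℝ} (hp : 1 ≤ p) {μ : Measure X}
    [IsProbabilityMeasure μ] {x₀ : X} (hgμ : Integrable (fun y => dist x₀ y ^ p) μ)
    {ε : ℝ} (hε : 0 < ε) :
    ∃ K : ℕ, 1 ≤ K ∧ ∀ k, K ≤ k → mCost p μ k Set.univ < ε := by
  classical
  have hp0 : (0:ℝ) ≤ p := le_trans zero_le_one hp
  have hpne : p ≠ 0 := by intro h; rw [h] at hp; norm_num at hp
  obtain ⟨M, hM0, hMμ⟩ := exists_tail_bound_single hp0 hgμ (show (0:ℝ) < ε/4 by linarith)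
  set r : ℝ := (2*M+1) ^ p⁻¹ with hrdef
  have hr0 : 0 ≤ r := Real.rpow_nonneg (by linarith) _
  have hrp : r ^ p = 2*M+1 := Real.rpow_inv_rpow (by linarith) hpne
  set δ : ℝ := (ε/2) ^ p⁻¹ with hδdef
  have hδ0 : 0 < δ := Real.rpow_pos_of_pos (by linarith) _
  have hδp : δ ^ p = ε/2 := Real.rpow_inv_rpow (by linarith) hpne
  obtain ⟨N₀, hN₀sub, hN₀fin, hN₀cov⟩ := Metric.finite_approx_of_totallyBounded
    (isCompact_closedBall x₀ r).totallyBounded δ hδ0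
  set N : Set X := N₀ ∪ {x₀} with hN
  have hNfin : N.Finite := hN₀fin.union (Set.finite_singleton x₀)
  have hNne : N.Nonempty := ⟨x₀, Set.mem_union_right _ rfl⟩
  set K : ℕ := N.ncard with hK
  have hK1 : 1 ≤ K := (Set.ncard_pos hNfin).2 hNne
  have hfeas : Feas K Set.univ N := ⟨Set.subset_univ _, hNfin, hNne, le_refl _⟩
  have hpoint : ∀ y, infDist y N ^ p ≤ ε/2 + 2*(dist x₀ y ^ p - min (dist x₀ y ^ p) M) := by
    intro y
    have hgy0 : (0:ℝ) ≤ dist x₀ y ^ p := Real.rpow_nonneg dist_nonneg p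
    have hmin : min (dist x₀ y ^ p) M ≤ dist x₀ y ^ p := min_le_left _ _
    rcases le_or_gt (dist x₀ y) r with hcase | hcase
    · have hy : y ∈ closedBall x₀ r := by rw [Metric.mem_closedBall, dist_comm]; exact hcase
      have := hN₀cov hy
      simp only [Set.mem_iUnion, Metric.mem_ball] at this
      obtain ⟨z, hzN, hz⟩ := this
      have h1 : infDist y N ≤ δ :=
        le_of_lt (lt_of_le_of_lt (Metric.infDist_le_dist_of_mem (Set.mem_union_left _ hzN)) hz)
      have h2 : infDist y N ^ p ≤ δ ^ p := Real.rpow_le_rpow Metric.infDist_nonneg h1 hp0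
      rw [hδp] at h2
      linarith
    · have h1 : infDist y N ≤ dist x₀ y := by
        rw [dist_comm]
        exact Metric.infDist_le_dist_of_mem (Set.mem_union_right _ rfl)
      have h2 : infDist y N ^ p ≤ dist x₀ y ^ p :=
        Real.rpow_le_rpow Metric.infDist_nonneg h1 hp0
      have h3 : r ^ p ≤ dist x₀ y ^ p := Real.rpow_le_rpow hr0 hcase.le hp0
      rw [hrp] at h3
      have h4 : min (dist x₀ y ^ p) M ≤ M := min_le_right _ _
      linarith
  have htail_int : Integrable (fun y => dist x₀ y ^ p - min (dist x₀ y ^ p) M) μ := by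
    have := hgμ.sub (integrable_min_g hp0 hgμ hM0)
    exact this
  have hint2 : Integrable (fun y => ε/2 + 2*(dist x₀ y ^ p - min (dist x₀ y ^ p) M)) μ := by
    have := (integrable_const (ε/2 : ℝ)).add (htail_int.const_mul 2)
    simpa using this
  have hmono := integral_mono (integrable_infDist_rpow hp0 hgμ hNne) hint2 hpoint
  rw [integral_add (integrable_const _) (htail_int.const_mul 2), integral_const_mul,
    integral_const] at hmono
  simp only [measure_univ, ENNReal.toReal_one, probReal_univ, one_smul] at hmono
  have hWp : Wp p N μ < ε := by
    have : Wp p N μ = ∫ y, infDist y N ^ p ∂ μ := rfl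
    rw [this]
    linarith
  refine ⟨K, hK1, fun k hk => ?_⟩
  calc mCost p μ k Set.univ ≤ mCost p μ K Set.univ :=
        mCost_anti ⟨x₀, Set.mem_univ x₀⟩ hK1 hk
    _ ≤ Wp p N μ := mCost_le_Wp hfeas
    _ < ε := hWp

end Small

/-- **Continuity of the elbow-method choice of `k`.** If `μ` has infinite support and a
unique maximizer `k*` of `k ↦ Δ²m_{k,p}(μ)` over `k ≥ 1`, and `μ_n → μ` in the
`p`-Wasserstein topology, then for all sufficiently large `n` the measure `μ_n` also has
`k*` as its unique maximizer; i.e. `k^elb_p(μ_n) = k^elb_p(μ) = k*` eventually. -/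
theorem stmt19 {X : Type*} [MetricSpace X] [ProperSpace X] [MeasurableSpace X] [BorelSpace X]
    (p : ℝ) (hp : 1 ≤ p) (μ : Measure X) [IsProbabilityMeasure μ] (hmom : FinMom p μ)
    (hsupp : (measSupp μ).Infinite)
    (kst : ℕ) (hkst : 1 ≤ kst)
    (hmax : ∀ j : ℕ, 1 ≤ j → j ≠ kst → elbowDiff p μ j < elbowDiff p μ kst)
    (μn : ℕ → Measure X) [∀ n, IsProbabilityMeasure (μn n)]
    (hmomn : ∀ n, FinMom p (μn n)) (hconv : WassTendsto p μn μ) :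
    ∀ᶠ n in atTop, ∀ j : ℕ, 1 ≤ j → j ≠ kst →
      elbowDiff p (μn n) j < elbowDiff p (μn n) kst := by
  classical
  obtain ⟨x₀, hmomconv⟩ := hconv.2
  have hweak := hconv.1
  have hp0 : (0:ℝ) ≤ p := le_trans zero_le_one hp
  obtain ⟨x₁, hx₁⟩ := hmom
  have hgμ : Integrable (fun y => dist x₀ y ^ p) μ :=
    integrable_dist_rpow_of_integrable hp0 hx₁ x₀
  have hgn : ∀ n, Integrable (fun y => dist x₀ y ^ p) (μn n) := fun n => by
    obtain ⟨x₂, hx₂⟩ := hmomn n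
    exact integrable_dist_rpow_of_integrable hp0 hx₂ x₀
  have htendsto : ∀ k, Tendsto (fun n => mCost p (μn n) k Set.univ) atTop
      (𝓝 (mCost p μ k Set.univ)) :=
    tendsto_mCost hp hgμ hgn hweak hmomconv
  have hΔtendsto : ∀ j, Tendsto (fun n => elbowDiff p (μn n) j) atTop
      (𝓝 (elbowDiff p μ j)) := by
    intro j
    have := ((htendsto (j+1)).add (htendsto (j-1))).sub ((htendsto j).const_mul 2)
    simpa [elbowDiff] using this
  have huniv : (Set.univ : Set X).Nonempty := ⟨x₀, Set.mem_univ x₀⟩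
  -- positivity of the peak
  have hpos : 0 < elbowDiff p μ kst := by
    by_contra hneg
    push_neg at hneg
    have hΔle : ∀ j : ℕ, 1 ≤ j → elbowDiff p μ j ≤ 0 := by
      intro j hj
      rcases eq_or_ne j kst with rfl | hne
      · exact hneg
      · exact le_of_lt (lt_of_lt_of_le (hmax j hj hne) hneg)
    -- b i := a (i+1) - a i
    set b : ℕ → ℝ := fun i => mCost p μ (i+1) Set.univ - mCost p μ i Set.univ with hb
    have hΔeq : ∀ i : ℕ, elbowDiff p μ (i+1) = b (i+1) - b i := by
      intro i
      simp only [hb, elbowDiff, Nat.add_sub_cancel]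
      ring
    have hbstep : ∀ i : ℕ, b (i+1) ≤ b i := by
      intro i
      have := hΔle (i+1) (by omega)
      rw [hΔeq i] at this
      linarith
    have hbmono : ∀ i j : ℕ, i ≤ j → b j ≤ b i := by
      intro i j hij
      induction j, hij using Nat.le_induction with
      | base => exact le_refl _
      | succ m hm ih => exact le_trans (hbstep m) ih
    -- strict drop at kst+1
    have hdrop : elbowDiff p μ (kst+1) < 0 := by
      rcases eq_or_ne (kst+1) kst with h | h
      · omega
      · exact lt_of_lt_of_le (hmax (kst+1) (by omega) h) hneg
    have hbkst : b kst ≤ 0 := by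
      have h1 : mCost p μ (kst+1) Set.univ ≤ mCost p μ kst Set.univ :=
        mCost_anti huniv hkst (by omega)
      simp only [hb]; linarith
    have hβ : b (kst+1) < 0 := by
      have := hΔeq kst
      rw [this] at hdrop
      linarith
    obtain ⟨K, hK1, hKsmall⟩ := mCost_small hp hgμ (show (0:ℝ) < -(b (kst+1)) by linarith)
    set j := max K (kst+1) with hj
    have h1 : b j ≤ b (kst+1) := hbmono (kst+1) j (le_max_right _ _)
    have h2 : mCost p μ j Set.univ < -(b (kst+1)) := hKsmall j (le_max_left _ _)
    have h3 : 0 ≤ mCost p μ (j+1) Set.univ := mCost_nonneg _ _ _ _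
    have h4 : -(mCost p μ j Set.univ) ≤ b j := by simp only [hb]; linarith
    linarith
  set ε₀ : ℝ := elbowDiff p μ kst / 4 with hε₀
  have hε₀pos : 0 < ε₀ := by simp only [hε₀]; linarith
  obtain ⟨K₀, hK₀1, hK₀⟩ := mCost_small hp hgμ hε₀pos
  -- eventual statements
  have hE1 : ∀ᶠ n in atTop, mCost p (μn n) K₀ Set.univ < ε₀ :=
    (htendsto K₀).eventually (eventually_lt_nhds (hK₀ K₀ (le_refl _)))
  have hE2 : ∀ᶠ n in atTop, 3*ε₀ < elbowDiff p (μn n) kst :=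
    (hΔtendsto kst).eventually (eventually_gt_nhds
      (by simp only [hε₀]; linarith))
  have hE3 : ∀ᶠ n in atTop, ∀ j ∈ Set.Icc 1 K₀,
      j ≠ kst → elbowDiff p (μn n) j < elbowDiff p (μn n) kst := by
    rw [Filter.eventually_all_finite (Set.finite_Icc 1 K₀)]
    intro j hj
    rcases eq_or_ne j kst with rfl | hne
    · filter_upwards with n h
      exact absurd rfl h
    · filter_upwards [(hΔtendsto j).eventually_lt (hΔtendsto kst) (hmax j hj.1 hne)] with n h _
      exact h
  filter_upwards [hE1, hE2, hE3] with n e1 e2 e3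
  intro j hj1 hjne
  rcases le_or_gt j K₀ with hle | hgt
  · exact e3 j ⟨hj1, hle⟩ hjne
  · obtain ⟨i, rfl⟩ : ∃ i, j = i + 1 := ⟨j - 1, by omega⟩
    have hδeq : elbowDiff p (μn n) (i+1) = mCost p (μn n) (i+2) Set.univ
        + mCost p (μn n) i Set.univ - 2 * mCost p (μn n) (i+1) Set.univ := by
      simp only [elbowDiff, Nat.add_sub_cancel]
    have hiK : K₀ ≤ i := by omega
    have hmono1 : mCost p (μn n) (i+2) Set.univ ≤ mCost p (μn n) K₀ Set.univ :=
      mCost_anti huniv hK₀1 (by omega)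
    have hmono2 : mCost p (μn n) i Set.univ ≤ mCost p (μn n) K₀ Set.univ :=
      mCost_anti huniv hK₀1 hiK
    have hnn : 0 ≤ mCost p (μn n) (i+1) Set.univ := mCost_nonneg _ _ _ _
    have : elbowDiff p (μn n) (i+1) < 3*ε₀ := by
      rw [hδeq]
      linarith
    linarith
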